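/- Let A > 0, P ≥ 0, Cφ = P + A, and A ≤ Δ ≤ Cφ. With M(z̃) defined by M(z̃) = Cφ z̃² e^{−(P−A)z̃²} if Cφ z̃² ≤ 1 and M(z̃) = e^{2A z̃² − 1} if Cφ z̃² ≥ 1, the maximum of λ̃ over pairs (λ̃, z̃) ∈ ℝ≥0² satisfying λ̃ e^{A z̃²} ≤ z̃² and λ̃ M(z̃) Δ ≤ 1 equals e^{1 − 2W(eA/Δ)}/Δ, attained at z̃ = √(W(eA/Δ)/A), where W is the principal Lambert W function. -/

import Mathlib

set_option maxHeartbeats 1000000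


/-- Locally stable case of the optimization problem: with `A > 0`, `P ≥ 0`,
`Cφ = P + A`, `A ≤ Δ ≤ Cφ`, and
`M(z̃) = Cφ z̃² e^{−(P−A)z̃²}` for `Cφ z̃² ≤ 1`, `M(z̃) = e^{2Az̃²−1}` otherwise,
the maximum of `λ̃` over pairs `(λ̃, z̃) ∈ ℝ≥0²` satisfying the self-map
condition `λ̃ e^{Az̃²} ≤ z̃²` and the contraction condition `λ̃ M(z̃) Δ ≤ 1`
equals `e^{1−2W(eA/Δ)}/Δ`, attained at `z̃ = √(W(eA/Δ)/A)`.
Here `W` is the principal Lambert W function, characterized by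
`W(y)e^{W(y)} = y` and `W(y) ≥ 0` for `y ≥ 0`. -/
theorem optimization_locally_stable
    (W : ℝ → ℝ)
    (hW : ∀ y, 0 ≤ y → 0 ≤ W y ∧ W y * Real.exp (W y) = y)
    (A P Δ : ℝ) (hA : 0 < A) (hP : 0 ≤ P) (hAΔ : A ≤ Δ) (hΔC : Δ ≤ P + A)
    (M : ℝ → ℝ)
    (hM : ∀ z : ℝ, M z =
      if (P + A) * z ^ 2 ≤ 1 then
        (P + A) * z ^ 2 * Real.exp (-((P - A) * z ^ 2))
      else Real.exp (2 * A * z ^ 2 - 1))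
    (S : Set (ℝ × ℝ))
    (hS : S = {p : ℝ × ℝ | 0 ≤ p.1 ∧ 0 ≤ p.2 ∧
      p.1 * Real.exp (A * p.2 ^ 2) ≤ p.2 ^ 2 ∧ p.1 * M p.2 * Δ ≤ 1}) :
    IsGreatest (Prod.fst '' S)
      (Real.exp (1 - 2 * W (Real.exp 1 * A / Δ)) / Δ) ∧
    (Real.exp (1 - 2 * W (Real.exp 1 * A / Δ)) / Δ,
      Real.sqrt (W (Real.exp 1 * A / Δ) / A)) ∈ S := by
  have hΔ : (0:ℝ) < Δ := lt_of_lt_of_le hA hAΔ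
  have hy0 : (0:ℝ) ≤ Real.exp 1 * A / Δ := by positivity
  obtain ⟨hw0, hwe⟩ := hW (Real.exp 1 * A / Δ) hy0
  set w := W (Real.exp 1 * A / Δ) with hwdef
  -- key identity : Δ * w * e^w = e * A
  have key : Δ * (w * Real.exp w) = Real.exp 1 * A := by
    rw [hwe]; field_simp
  have hwpos : 0 < w := by
    rcases hw0.lt_or_eq with h | h
    · exact h
    · exfalso
      have : Δ * (w * Real.exp w) = 0 := by rw [← h]; ring
      nlinarith [Real.exp_pos (1:ℝ)]
  have hw1 : w ≤ 1 := by
    by_contra h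
    push_neg at h
    have h1 : Real.exp 1 < Real.exp w := Real.exp_lt_exp.mpr h
    have h2 : Δ * (1 * Real.exp 1) < Δ * (w * Real.exp w) := by
      apply mul_lt_mul_of_pos_left _ hΔ
      nlinarith [Real.exp_pos (1:ℝ)]
    have h3 : A * Real.exp 1 ≤ Δ * Real.exp 1 :=
      mul_le_mul_of_nonneg_right hAΔ (Real.exp_pos 1).le
    rw [key] at h2
    nlinarith
  -- w ≥ A/Δ, hence (P+A)*(w/A) ≥ 1
  have hwA : A ≤ Δ * w := by
    have h1 : Real.exp w ≤ Real.exp 1 := Real.exp_le_exp.mpr hw1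
    nlinarith [Real.exp_pos (1:ℝ), Real.exp_pos w]
  set u := w / A with hu
  have hu0 : 0 ≤ u := le_of_lt (div_pos hwpos hA)
  have hAu : A * u = w := by rw [hu]; field_simp
  have hzsq : (Real.sqrt u) ^ 2 = u := Real.sq_sqrt hu0
  have hCu : 1 ≤ (P + A) * u := by
    rw [hu, ← mul_div_assoc, le_div_iff₀ hA, one_mul]
    nlinarith [mul_nonneg (sub_nonneg.mpr hΔC) hw0]
  -- Δ * w = e * A * e^{-w}
  have hkey2 : Δ * w = Real.exp 1 * A * Real.exp (-w) := by
    calc Δ * w = Δ * (w * (Real.exp w * Real.exp (-w))) := by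
          rw [← Real.exp_add]; simp
      _ = Δ * (w * Real.exp w) * Real.exp (-w) := by ring
      _ = Real.exp 1 * A * Real.exp (-w) := by rw [key]
  -- the claimed optimal value equals u * e^{-w}
  have e1 : Real.exp (1 - 2*w) = Real.exp 1 * Real.exp (-w) * Real.exp (-w) := by
    rw [← Real.exp_add, ← Real.exp_add]; ring_nf
  have hval : Real.exp (1 - 2 * w) / Δ = u * Real.exp (-w) := by
    rw [hu, e1, div_eq_iff hΔ.ne', div_mul_eq_mul_div, div_mul_eq_mul_div,
      eq_div_iff hA.ne']
    linear_combination (-(Real.exp (-w))) * hkey2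
  -- the self-map constraint is tight at the optimum
  have hc1 : Real.exp (1 - 2*w) / Δ * Real.exp w = u := by
    rw [hu, div_mul_eq_mul_div, ← Real.exp_add,
      show 1 - 2*w + w = 1 + -w by ring, Real.exp_add,
      div_eq_div_iff hΔ.ne' hA.ne']
    linear_combination -hkey2
  -- monotonicity of a ↦ a e^{-Aa} on [0, 1/A]
  have mono : ∀ a b : ℝ, 0 ≤ a → a ≤ b → A * b ≤ 1 →
      a * Real.exp (-(A*a)) ≤ b * Real.exp (-(A*b)) := by
    intro a b ha hab hb1
    have hb : 0 ≤ b := ha.trans hab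
    have h2 : 1 + A*(a-b) ≤ Real.exp (A*(a-b)) := by
      have := Real.add_one_le_exp (A*(a-b)); linarith
    have h1 : a ≤ b * Real.exp (A*(a-b)) := by nlinarith
    calc a * Real.exp (-(A*a)) ≤ (b * Real.exp (A*(a-b))) * Real.exp (-(A*a)) :=
          mul_le_mul_of_nonneg_right h1 (Real.exp_pos _).le
      _ = b * Real.exp (-(A*b)) := by
          rw [mul_assoc, ← Real.exp_add]; ring_nf
  -- membership of the optimal pair
  have hmem : (Real.exp (1 - 2 * w) / Δ, Real.sqrt u) ∈ S := by
    rw [hS]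
    simp only [Set.mem_setOf_eq]
    refine ⟨by positivity, Real.sqrt_nonneg _, ?_, ?_⟩
    · -- self-map constraint, with equality
      simp only [hzsq, hAu]
      exact le_of_eq hc1
    · -- contraction constraint, with equality
      have hexp : Real.exp (1 - 2*w) * Real.exp (2*w - 1) = 1 := by
        rw [← Real.exp_add]; ring_nf; exact Real.exp_zero
      have hMval : M (Real.sqrt u) = Real.exp (2*w - 1) := by
        rw [hM, hzsq]
        by_cases h : (P + A) * u ≤ 1
        · have hone : (P + A) * u = 1 := le_antisymm h hCu
          rw [if_pos h, hone, one_mul]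
          congr 1
          nlinarith
        · rw [if_neg h]
          congr 1
          nlinarith
      rw [hMval, div_mul_eq_mul_div, div_mul_eq_mul_div, div_le_one hΔ, hexp, one_mul]
  constructor
  · constructor
    · exact ⟨_, hmem, rfl⟩
    · -- upper bound
      rintro x ⟨⟨l, z⟩, hp, rfl⟩
      rw [hS] at hp
      obtain ⟨hl0, hz0, h1, h2⟩ := hp
      simp only at h1 h2 ⊢
      by_cases hcase : z ^ 2 ≤ u
      · -- use the self-map constraint
        rw [hval]
        have hb1 : A * u ≤ 1 := by rw [hAu]; exact hw1
        have hstep : z^2 * Real.exp (-(A*z^2)) ≤ u * Real.exp (-(A*u)) :=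
          mono _ _ (sq_nonneg z) hcase hb1
        rw [hAu] at hstep
        have hl : l ≤ z^2 * Real.exp (-(A*z^2)) := by
          have he : Real.exp (A*z^2) * Real.exp (-(A*z^2)) = 1 := by
            rw [← Real.exp_add]; simp
          have h3 := mul_le_mul_of_nonneg_right h1 (Real.exp_pos (-(A*z^2))).le
          calc l = l * (Real.exp (A*z^2) * Real.exp (-(A*z^2))) := by rw [he, mul_one]
            _ = l * Real.exp (A*z^2) * Real.exp (-(A*z^2)) := by ring
            _ ≤ z^2 * Real.exp (-(A*z^2)) := h3
        exact hl.trans hstep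
      · -- use the contraction constraint
        push_neg at hcase
        have hbr : ¬ (P + A) * z ^ 2 ≤ 1 := by
          push_neg
          calc (1:ℝ) ≤ (P + A) * u := hCu
            _ < (P + A) * z^2 := by
                apply mul_lt_mul_of_pos_left hcase; linarith
        have hM2 : M z = Real.exp (2 * A * z ^ 2 - 1) := by rw [hM, if_neg hbr]
        rw [hM2] at h2
        have hpos : (0:ℝ) < Real.exp (1 - 2*A*z^2) / Δ := by positivity
        have h3 := mul_le_mul_of_nonneg_right h2 hpos.le
        have heq : l * Real.exp (2*A*z^2 - 1) * Δ * (Real.exp (1 - 2*A*z^2)/Δ) = l := by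
          have he : Real.exp (2*A*z^2 - 1) * Real.exp (1 - 2*A*z^2) = 1 := by
            rw [← Real.exp_add]; ring_nf; exact Real.exp_zero
          field_simp
          linear_combination l * he
        have hl : l ≤ Real.exp (1 - 2*A*z^2) / Δ := by
          calc l = l * Real.exp (2*A*z^2 - 1) * Δ * (Real.exp (1 - 2*A*z^2)/Δ) := heq.symm
            _ ≤ 1 * (Real.exp (1 - 2*A*z^2)/Δ) := h3
            _ = Real.exp (1 - 2*A*z^2)/Δ := one_mul _
        have hz2 : w ≤ A * z^2 := by
          nlinarith [mul_le_mul_of_nonneg_left hcase.le hA.le]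
        have hexple : Real.exp (1 - 2*A*z^2) ≤ Real.exp (1 - 2*w) :=
          Real.exp_le_exp.mpr (by linarith)
        have hmon : Real.exp (1 - 2*A*z^2) / Δ ≤ Real.exp (1 - 2*w) / Δ :=
          (div_le_div_iff_of_pos_right hΔ).mpr hexple
        exact hl.trans hmon
  · exact hmem
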